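/- The function φ(t) = 2π ∑_{n=1}^∞ (2π n⁴ e^{-9t/2} - 3 n² e^{-5t/2}) exp(-n² π e^{-2t}) is an even function of t on ℝ. -/

import Mathlib

open Real

noncomputable def phi (t : ℝ) : ℝ :=
  2 * π * ∑' n : ℕ,
    (2 * π * ((n : ℝ) + 1) ^ 4 * Real.exp (-9 * t / 2)
      - 3 * ((n : ℝ) + 1) ^ 2 * Real.exp (-5 * t / 2))
    * Real.exp (-((n : ℝ) + 1) ^ 2 * π * Real.exp (-2 * t))


noncomputable def Zth (k : ℕ) (a : ℝ) : ℝ := ∑' n : ℤ, (n:ℝ)^(2*k) * Real.exp (-π * (n:ℝ)^2 * a)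

lemma Zth_def (k : ℕ) (a : ℝ) :
    Zth k a = ∑' n : ℤ, (n:ℝ)^(2*k) * Real.exp (-π * (n:ℝ)^2 * a) := rfl

lemma summable_nat_aux (k : ℕ) {a : ℝ} (ha : 0 < a) :
    Summable (fun n : ℕ => (n:ℝ)^k * Real.exp (-π * (n:ℝ)^2 * a)) := by
  have hr : ‖Real.exp (-π * a)‖ < 1 := by
    rw [Real.norm_eq_abs, abs_of_pos (Real.exp_pos _)]
    exact Real.exp_lt_one_iff.2 (by nlinarith [Real.pi_pos])
  refine Summable.of_nonneg_of_le (fun n => ?_) (fun n => ?_)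
    (summable_pow_mul_geometric_of_norm_lt_one k hr)
  · positivity
  · have h1 : Real.exp (-π * (n:ℝ)^2 * a) ≤ Real.exp (-π * a) ^ n := by
      rw [← Real.exp_nat_mul]
      apply Real.exp_le_exp.2
      have h2 : (n:ℝ) ≤ (n:ℝ)^2 := by exact_mod_cast Nat.le_self_pow two_ne_zero n
      have h3 := mul_le_mul_of_nonneg_left h2 (mul_pos Real.pi_pos ha).le
      nlinarith
    exact mul_le_mul_of_nonneg_left h1 (by positivity)

lemma summable_int_aux (k : ℕ) {a : ℝ} (ha : 0 < a) :
    Summable (fun n : ℤ => (n:ℝ)^(2*k) * Real.exp (-π * (n:ℝ)^2 * a)) := by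
  apply Summable.of_nat_of_neg_add_one
  · exact_mod_cast summable_nat_aux (2*k) ha
  · have h := (summable_nat_add_iff 1).2 (summable_nat_aux (2*k) ha)
    apply h.congr
    intro n
    push_cast
    rw [show (-((n:ℝ)+1))^(2*k) = ((n:ℝ)+1)^(2*k) from (Even.neg_pow (even_two_mul k) _),
      show (-((n:ℝ)+1))^2 = ((n:ℝ)+1)^2 from neg_sq _]

lemma hasDerivAt_Zth (k : ℕ) {a : ℝ} (ha : 0 < a) :
    HasDerivAt (Zth k) (-π * Zth (k+1) a) a := by
  have hmem : a ∈ Set.Ioi (a/2) := Set.mem_Ioi.2 (half_lt_self ha)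
  have key : HasDerivAt (fun z => ∑' n : ℤ, (n:ℝ)^(2*k) * Real.exp (-π * (n:ℝ)^2 * z))
      (∑' n : ℤ, (-π * ((n:ℝ)^(2*(k+1)) * Real.exp (-π * (n:ℝ)^2 * a)))) a := by
    refine hasDerivAt_tsum_of_isPreconnected
      (u := fun n : ℤ => π * ((n:ℝ)^(2*(k+1)) * Real.exp (-π * (n:ℝ)^2 * (a/2))))
      (g := fun (n : ℤ) (z : ℝ) => (n:ℝ)^(2*k) * Real.exp (-π * (n:ℝ)^2 * z))
      (g' := fun (n : ℤ) (z : ℝ) => -π * ((n:ℝ)^(2*(k+1)) * Real.exp (-π * (n:ℝ)^2 * z)))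
      (((summable_int_aux (k+1) (half_pos ha))).mul_left π) isOpen_Ioi isPreconnected_Ioi
      ?_ ?_ hmem (summable_int_aux k ha) hmem
    · intro n y _
      have h1 : HasDerivAt (fun z : ℝ => -π * (n:ℝ)^2 * z) (-π * (n:ℝ)^2) y := by
        have h0 := (hasDerivAt_id y).const_mul (-π * (n:ℝ)^2)
        rwa [mul_one] at h0
      have h2 := (h1.exp).const_mul ((n:ℝ)^(2*k))
      exact h2.congr_deriv (by ring)
    · intro n y hy
      simp only [norm_mul, Real.norm_eq_abs, abs_neg, abs_of_pos Real.pi_pos,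
        abs_of_nonneg ((even_two_mul (k+1)).pow_nonneg ((n:ℝ))),
        abs_of_pos (Real.exp_pos _)]
      have hle : Real.exp (-π * (n:ℝ)^2 * y) ≤ Real.exp (-π * (n:ℝ)^2 * (a/2)) := by
        apply Real.exp_le_exp.2
        have h2 : (0:ℝ) ≤ π * (n:ℝ)^2 := by positivity
        have h3 : a/2 ≤ y := (Set.mem_Ioi.1 hy).le
        nlinarith
      have h4 : (0:ℝ) ≤ (n:ℝ)^(2*(k+1)) := (even_two_mul (k+1)).pow_nonneg _
      have := mul_le_mul_of_nonneg_left hle h4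
      nlinarith [Real.pi_pos]
  have hfun : Zth k = fun z => ∑' n : ℤ, (n:ℝ)^(2*k) * Real.exp (-π * (n:ℝ)^2 * z) :=
    funext fun z => Zth_def k z
  rw [hfun, Zth_def]
  rwa [tsum_mul_left] at key

lemma funEq0 {a : ℝ} (ha : 0 < a) : Zth 0 a = a ^ (-(1:ℝ)/2) * Zth 0 a⁻¹ := by
  rw [Zth_def, Zth_def]
  have h1 : ∀ n : ℤ, (n:ℝ)^(2*0) * Real.exp (-π * (n:ℝ)^2 * a) = Real.exp (-π * a * (n:ℝ)^2) := by
    intro n; rw [pow_zero, one_mul]; ring_nf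
  have h2 : ∀ n : ℤ, (n:ℝ)^(2*0) * Real.exp (-π * (n:ℝ)^2 * a⁻¹) = Real.exp (-π / a * (n:ℝ)^2) := by
    intro n; rw [pow_zero, one_mul]; rw [div_eq_mul_inv]; ring_nf
  rw [tsum_congr h1, tsum_congr h2, Real.tsum_exp_neg_mul_int_sq ha]
  congr 1
  rw [one_div, ← Real.rpow_neg ha.le]
  norm_num

/-- If two functions agree on `Ioi 0`, their derivatives at a positive point agree. -/
lemma deriv_transfer {f g : ℝ → ℝ} {f' g' a : ℝ} (ha : 0 < a)
    (h : ∀ x, 0 < x → f x = g x) (hf : HasDerivAt f f' a) (hg : HasDerivAt g g' a) :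
    f' = g' := by
  have hev : f =ᶠ[nhds a] g := by
    filter_upwards [Ioi_mem_nhds ha] with x hx using h x hx
  exact hf.unique (hg.congr_of_eventuallyEq hev)

lemma E1 {a : ℝ} (ha : 0 < a) :
    -π * Zth 1 a =
      (-(1:ℝ)/2 * a ^ (-(1:ℝ)/2 - 1)) * Zth 0 a⁻¹
        + a ^ (-(1:ℝ)/2) * (-π * Zth 1 a⁻¹ * -(a ^ 2)⁻¹) := by
  have H1 : HasDerivAt (fun x : ℝ => x ^ (-(1:ℝ)/2)) (-(1:ℝ)/2 * a ^ (-(1:ℝ)/2 - 1)) a :=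
    Real.hasDerivAt_rpow_const (Or.inl ha.ne')
  have H2 : HasDerivAt (fun x : ℝ => Zth 0 x⁻¹) (-π * Zth 1 a⁻¹ * -(a ^ 2)⁻¹) a :=
    (hasDerivAt_Zth 0 (inv_pos.2 ha)).comp a (hasDerivAt_inv ha.ne')
  exact deriv_transfer ha (fun x hx => funEq0 hx) (hasDerivAt_Zth 0 ha) (H1.mul H2)

lemma E2 {a : ℝ} (ha : 0 < a) :
    -π * (-π * Zth 2 a) =
      ((-(1:ℝ)/2 * ((-(1:ℝ)/2 - 1) * a ^ (-(1:ℝ)/2 - 1 - 1))) * Zth 0 a⁻¹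
          + (-(1:ℝ)/2 * a ^ (-(1:ℝ)/2 - 1)) * (-π * Zth 1 a⁻¹ * -(a ^ 2)⁻¹))
        + ((-(1:ℝ)/2 * a ^ (-(1:ℝ)/2 - 1)) * (-π * Zth 1 a⁻¹ * -(a ^ 2)⁻¹)
          + a ^ (-(1:ℝ)/2) *
            ((-π * (-π * Zth 2 a⁻¹ * -(a ^ 2)⁻¹)) * -(a ^ 2)⁻¹
              + (-π * Zth 1 a⁻¹) * -(-(2*a) / (a ^ 2) ^ 2))) := by
  have hrpow : ∀ (p : ℝ), HasDerivAt (fun x : ℝ => x ^ p) (p * a ^ (p - 1)) a :=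
    fun p => Real.hasDerivAt_rpow_const (Or.inl ha.ne')
  have HC1 : HasDerivAt (fun x : ℝ => -(1:ℝ)/2 * x ^ (-(1:ℝ)/2 - 1))
      (-(1:ℝ)/2 * ((-(1:ℝ)/2 - 1) * a ^ (-(1:ℝ)/2 - 1 - 1))) a :=
    (hrpow _).const_mul _
  have HD1 : HasDerivAt (fun x : ℝ => Zth 0 x⁻¹) (-π * Zth 1 a⁻¹ * -(a ^ 2)⁻¹) a :=
    (hasDerivAt_Zth 0 (inv_pos.2 ha)).comp a (hasDerivAt_inv ha.ne')
  have HC2 : HasDerivAt (fun x : ℝ => x ^ (-(1:ℝ)/2)) (-(1:ℝ)/2 * a ^ (-(1:ℝ)/2 - 1)) a := by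
    have := hrpow (-(1:ℝ)/2)
    convert this using 2
  have HZ1 : HasDerivAt (fun x : ℝ => -π * Zth 1 x⁻¹) (-π * (-π * Zth 2 a⁻¹ * -(a ^ 2)⁻¹)) a :=
    ((hasDerivAt_Zth 1 (inv_pos.2 ha)).comp a (hasDerivAt_inv ha.ne')).const_mul _
  have HSQ : HasDerivAt (fun x : ℝ => -(x ^ 2)⁻¹) (-(-(2*a) / (a ^ 2) ^ 2)) a := by
    have h := ((hasDerivAt_pow 2 a).inv (by positivity)).neg
    exact h.congr_deriv (by norm_num)
  have HD2 : HasDerivAt (fun x : ℝ => -π * Zth 1 x⁻¹ * -(x ^ 2)⁻¹)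
      ((-π * (-π * Zth 2 a⁻¹ * -(a ^ 2)⁻¹)) * -(a ^ 2)⁻¹
        + (-π * Zth 1 a⁻¹) * -(-(2*a) / (a ^ 2) ^ 2)) a := HZ1.mul HSQ
  have HL : HasDerivAt (fun x : ℝ => -π * Zth 1 x) (-π * (-π * Zth 2 a)) a :=
    (hasDerivAt_Zth 1 ha).const_mul _
  exact deriv_transfer ha (fun x hx => E1 hx) HL ((HC1.mul HD1).add (HC2.mul HD2))

lemma keylemma {x : ℝ} (hx : 0 < x) :
    2*π^2 * x^((9:ℝ)/4) * Zth 2 x - 3*π * x^((5:ℝ)/4) * Zth 1 x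
      = 2*π^2 * x^(-(9:ℝ)/4) * Zth 2 x⁻¹ - 3*π * x^(-(5:ℝ)/4) * Zth 1 x⁻¹ := by
  have hE1 := E1 hx
  have hE2 := E2 hx
  set p := x ^ ((1:ℝ)/4) with hp_def
  have hp : 0 < p := Real.rpow_pos_of_pos hx _
  have hconv : ∀ (n : ℕ) (r : ℝ), (n:ℝ)/4 = r → x ^ r = p ^ n := by
    intro n r h
    rw [← h, hp_def, ← Real.rpow_natCast (x ^ ((1:ℝ)/4)) n, ← Real.rpow_mul hx.le]
    congr 1
    ring
  have hneg : ∀ (n : ℕ) (r : ℝ), -((n:ℝ)/4) = r → x ^ r = (p ^ n)⁻¹ := by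
    intro n r h
    rw [← h, show (-((n:ℝ)/4)) = -((n:ℝ)/4) from rfl, Real.rpow_neg hx.le, hconv n ((n:ℝ)/4) rfl]
  have hx1 : x = p ^ 4 := by
    rw [← Real.rpow_one x]; exact hconv 4 1 (by norm_num)
  have hx2 : (x ^ 2 : ℝ) = p ^ 8 := by rw [hx1]; ring
  rw [show x ^ ((9:ℝ)/4) = p ^ 9 from hconv 9 _ (by norm_num),
    show x ^ ((5:ℝ)/4) = p ^ 5 from hconv 5 _ (by norm_num),
    show x ^ (-(9:ℝ)/4) = (p ^ 9)⁻¹ from hneg 9 _ (by norm_num),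
    show x ^ (-(5:ℝ)/4) = (p ^ 5)⁻¹ from hneg 5 _ (by norm_num)]
  rw [show x ^ ((-1:ℝ)/2 - 1) = (p ^ 6)⁻¹ from hneg 6 _ (by norm_num),
    show x ^ ((-1:ℝ)/2) = (p ^ 2)⁻¹ from hneg 2 _ (by norm_num), hx2] at hE1
  rw [show x ^ ((-1:ℝ)/2 - 1 - 1) = (p ^ 10)⁻¹ from hneg 10 _ (by norm_num),
    show x ^ ((-1:ℝ)/2 - 1) = (p ^ 6)⁻¹ from hneg 6 _ (by norm_num),
    show x ^ ((-1:ℝ)/2) = (p ^ 2)⁻¹ from hneg 2 _ (by norm_num), hx2] at hE2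
  rw [hx1] at hE1 hE2 ⊢
  field_simp at hE1 hE2 ⊢
  have hE1' : 2*π*Zth 1 (p^4)*p^10 = Zth 0 (1/p^4)*p^4 - 2*π*Zth 1 (1/p^4) := by
    have h6 : (2*π*Zth 1 (p^4)*p^10) * p^6 = (Zth 0 (1/p^4)*p^4 - 2*π*Zth 1 (1/p^4)) * p^6 := by
      linear_combination -p^6 * hE1
    exact mul_right_cancel₀ (pow_ne_zero 6 hp.ne') h6
  have hE2' : 16*π^2*Zth 2 (p^4)*p^18
      = 12*Zth 0 (1/p^4)*p^8 - 48*π*Zth 1 (1/p^4)*p^4 + 16*π^2*Zth 2 (1/p^4) := by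
    have h54 : (16*π^2*Zth 2 (p^4)*p^18) * p^54
        = (12*Zth 0 (1/p^4)*p^8 - 48*π*Zth 1 (1/p^4)*p^4 + 16*π^2*Zth 2 (1/p^4)) * p^54 := by
      linear_combination 4*p^54 * hE2
    exact mul_right_cancel₀ (pow_ne_zero 54 hp.ne') h54
  refine mul_left_cancel₀ Real.pi_pos.ne' ?_
  linear_combination (1/8) * hE2' - (3/2)*p^4 * hE1'


lemma summable_shift (k : ℕ) {x : ℝ} (hx : 0 < x) :
    Summable (fun n : ℕ => ((n:ℝ)+1)^k * Real.exp (-π * ((n:ℝ)+1)^2 * x)) := by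
  have h := (summable_nat_add_iff 1).2 (summable_nat_aux k hx)
  apply h.congr
  intro n
  push_cast
  ring_nf

lemma Zth_nat (k : ℕ) (hk : 0 < k) {x : ℝ} (hx : 0 < x) :
    Zth k x = 2 * ∑' n : ℕ, ((n:ℝ)+1)^(2*k) * Real.exp (-π * ((n:ℝ)+1)^2 * x) := by
  have hnat : Summable (fun n : ℕ => ((n:ℤ):ℝ)^(2*k) * Real.exp (-π * ((n:ℤ):ℝ)^2 * x)) := by
    exact_mod_cast summable_nat_aux (2*k) hx
  have hneg : Summable (fun n : ℕ =>
      ((-((n:ℤ)+1) : ℤ):ℝ)^(2*k) * Real.exp (-π * ((-((n:ℤ)+1) : ℤ):ℝ)^2 * x)) := by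
    apply (summable_shift (2*k) hx).congr
    intro n
    push_cast
    rw [show (-((n:ℝ)+1))^(2*k) = ((n:ℝ)+1)^(2*k) from (Even.neg_pow (even_two_mul k) _),
      show (-((n:ℝ)+1))^2 = ((n:ℝ)+1)^2 from neg_sq _]
  rw [Zth_def, tsum_of_nat_of_neg_add_one (f := fun n : ℤ => ((n:ℝ))^(2*k) * Real.exp (-π * (n:ℝ)^2 * x)) hnat hneg]
  have e1 : ∑' n : ℕ, ((n:ℤ):ℝ)^(2*k) * Real.exp (-π * ((n:ℤ):ℝ)^2 * x)
      = 0 + ∑' n : ℕ, ((n:ℝ)+1)^(2*k) * Real.exp (-π * ((n:ℝ)+1)^2 * x) := by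
    rw [Summable.tsum_eq_zero_add hnat]
    congr 1
    · simp [pow_eq_zero_iff, hk.ne']
    · apply tsum_congr; intro n; push_cast; ring_nf
  have e2 : ∑' n : ℕ, ((-((n:ℤ)+1) : ℤ):ℝ)^(2*k) * Real.exp (-π * ((-((n:ℤ)+1) : ℤ):ℝ)^2 * x)
      = ∑' n : ℕ, ((n:ℝ)+1)^(2*k) * Real.exp (-π * ((n:ℝ)+1)^2 * x) := by
    apply tsum_congr
    intro n
    push_cast
    rw [show (-((n:ℝ)+1))^(2*k) = ((n:ℝ)+1)^(2*k) from (Even.neg_pow (even_two_mul k) _),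
      show (-((n:ℝ)+1))^2 = ((n:ℝ)+1)^2 from neg_sq _]
  rw [e1, e2]
  ring

lemma phi_eq (t : ℝ) :
    phi t = 2*π^2 * (Real.exp (-2*t))^((9:ℝ)/4) * Zth 2 (Real.exp (-2*t))
      - 3*π * (Real.exp (-2*t))^((5:ℝ)/4) * Zth 1 (Real.exp (-2*t)) := by
  set x := Real.exp (-2*t) with hxdef
  have hx : 0 < x := Real.exp_pos _
  have h94 : x ^ ((9:ℝ)/4) = Real.exp (-9*t/2) := by
    rw [hxdef, Real.rpow_def_of_pos (Real.exp_pos _), Real.log_exp]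
    congr 1; ring
  have h54 : x ^ ((5:ℝ)/4) = Real.exp (-5*t/2) := by
    rw [hxdef, Real.rpow_def_of_pos (Real.exp_pos _), Real.log_exp]
    congr 1; ring
  have hterm : ∀ n : ℕ,
      (2 * π * ((n : ℝ) + 1) ^ 4 * Real.exp (-9 * t / 2)
        - 3 * ((n : ℝ) + 1) ^ 2 * Real.exp (-5 * t / 2))
      * Real.exp (-((n : ℝ) + 1) ^ 2 * π * x)
      = (2 * π * Real.exp (-9 * t / 2)) * (((n:ℝ)+1)^4 * Real.exp (-π * ((n:ℝ)+1)^2 * x))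
        - (3 * Real.exp (-5 * t / 2)) * (((n:ℝ)+1)^2 * Real.exp (-π * ((n:ℝ)+1)^2 * x)) := by
    intro n
    rw [show (-((n:ℝ)+1)^2 * π * x) = (-π * ((n:ℝ)+1)^2 * x) by ring]
    ring
  rw [phi, tsum_congr hterm,
    Summable.tsum_sub ((summable_shift 4 hx).mul_left _) ((summable_shift 2 hx).mul_left _),
    tsum_mul_left, tsum_mul_left,
    Zth_nat 2 (by norm_num) hx, Zth_nat 1 (by norm_num) hx, h94, h54]
  push_cast
  ring

theorem phi_even : ∀ t : ℝ, phi (-t) = phi t := by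
  intro t
  rw [phi_eq t, phi_eq (-t)]
  have hx : 0 < Real.exp (-2*t) := Real.exp_pos _
  rw [show (-2*(-t)) = -(-2*t) by ring, Real.exp_neg,
    Real.inv_rpow hx.le, Real.inv_rpow hx.le,
    ← Real.rpow_neg hx.le, ← Real.rpow_neg hx.le,
    show -((9:ℝ)/4) = -(9:ℝ)/4 by norm_num, show -((5:ℝ)/4) = -(5:ℝ)/4 by norm_num]
  exact (keylemma hx).symm
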